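/- Let T be a tournament on 6 vertices with fewer than 6 diamonds (δ_T < 6). Then T is switching equivalent to a tournament containing a transitive subtournament on 5 vertices. -/

import Mathlib

open scoped Classical

/-- A tournament: irreflexive, and between distinct vertices exactly one arc. -/
def IsTournament {V : Type*} (r : V → V → Prop) : Prop :=
  (∀ i, ¬ r i i) ∧ ∀ i j, i ≠ j → (r i j ↔ ¬ r j i)

/-- Skew-adjacency matrix of a relation. -/
noncomputable def skew {V : Type*} (r : V → V → Prop) : Matrix V V ℤ :=
  Matrix.of fun i j => if r i j then 1 else if r j i then -1 else 0

/-- Determinant of the skew-adjacency matrix. -/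
noncomputable def tdet {V : Type*} [Fintype V] [DecidableEq V] (r : V → V → Prop) : ℤ :=
  (skew r).det

/-- Determinant of the subtournament induced by a finite vertex subset. -/
noncomputable def subdet {V : Type*} [Fintype V] [DecidableEq V] (r : V → V → Prop)
    (s : Finset V) : ℤ :=
  ((skew r).submatrix (fun x : {x // x ∈ s} => x.1) (fun x : {x // x ∈ s} => x.1)).det

/-- Switch of `r` with respect to `W`: arcs between `W` and its complement are reversed. -/
def switchRel {V : Type*} (r : V → V → Prop) (W : Set V) : V → V → Prop :=
  fun i j => if (i ∈ W ↔ j ∈ W) then r i j else r j i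

/-- Switching equivalence of two tournaments on the same vertex set. -/
def SwitchEquiv {V : Type*} (r₁ r₂ : V → V → Prop) : Prop :=
  ∃ W : Set V, ∀ i j, r₂ i j ↔ switchRel r₁ W i j

def IsTransitive {V : Type*} (r : V → V → Prop) : Prop :=
  ∀ a b c, r a b → r b c → r a c

def IsTransitiveOn {V : Type*} (r : V → V → Prop) (X : Finset V) : Prop :=
  ∀ a ∈ X, ∀ b ∈ X, ∀ c ∈ X, r a b → r b c → r a c

/-- A 4-set inducing a diamond: a vertex dominating or dominated by a 3-cycle. -/
def IsDiamond {V : Type*} (r : V → V → Prop) (X : Finset V) : Prop :=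
  ∃ a b c d : V, X = {a, b, c, d} ∧ a ≠ b ∧ a ≠ c ∧ a ≠ d ∧ b ≠ c ∧ b ≠ d ∧ c ≠ d ∧
    r b c ∧ r c d ∧ r d b ∧ ((r a b ∧ r a c ∧ r a d) ∨ (r b a ∧ r c a ∧ r d a))

/-- Number of diamonds of a tournament. -/
noncomputable def numDiamonds {V : Type*} [Fintype V] (r : V → V → Prop) : ℕ :=
  Set.ncard {X : Finset V | IsDiamond r X}

/-- The tournament `L_n`: a transitive chain `u_0 → ⋯ → u_{n-2}` together with a last
vertex alternating along the chain, starting with `u_{n-1} → u_0`. -/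
def LRel (n : ℕ) : Fin n → Fin n → Prop := fun i j =>
  (j.val < n - 1 ∧ i.val < j.val) ∨
  (j.val = n - 1 ∧ i.val < n - 1 ∧ i.val % 2 = 1) ∨
  (i.val = n - 1 ∧ j.val < n - 1 ∧ j.val % 2 = 0)

/-- Join of two tournaments: all arcs from the first to the second. -/
def joinRel {A B : Type*} (r : A → A → Prop) (s : B → B → Prop) : A ⊕ B → A ⊕ B → Prop :=
  fun x y => match x, y with
  | .inl a, .inl a' => r a a'
  | .inr b, .inr b' => s b b'
  | .inl _, .inr _ => True
  | .inr _, .inl _ => False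

/-- `T⁺`: add one new vertex dominated by every vertex of `T`. -/
def plusRel {A : Type*} (r : A → A → Prop) : Option A → Option A → Prop :=
  fun x y => match x, y with
  | some a, some b => r a b
  | some _, none => True
  | _, _ => False

/-- Blowup of `r` by the family of tournaments `t`. -/
def blowupG {ι : Type*} [DecidableEq ι] (r : ι → ι → Prop) {κ : ι → Type*}
    (t : ∀ i, κ i → κ i → Prop) : (Σ i, κ i) → (Σ i, κ i) → Prop :=
  fun x y => if h : x.1 = y.1 then t y.1 (h ▸ x.2) y.2 else r x.1 y.1

/-- Transitive `(a_1,…,a_n)`-blowup of `r`. -/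
def blowup {ι : Type*} [DecidableEq ι] (r : ι → ι → Prop) (a : ι → ℕ) :
    (Σ i, Fin (a i)) → (Σ i, Fin (a i)) → Prop :=
  blowupG r (fun _ p q => p < q)

/-- Membership in `𝒟_k`: every subtournament has determinant at most `k²`. -/
def memD {V : Type*} [Fintype V] [DecidableEq V] (r : V → V → Prop) (k : ℕ) : Prop :=
  ∀ s : Finset V, subdet r s ≤ (k : ℤ) ^ 2

/-! ### Boolean model on `Fin 5` -/

def pidxNat (i j : ℕ) : ℕ := i*4 + j - 1 - i*(i+1)/2

def upPair : Fin 10 → Fin 5 × Fin 5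
  | 0 => (0,1) | 1 => (0,2) | 2 => (0,3) | 3 => (0,4)
  | 4 => (1,2) | 5 => (1,3) | 6 => (1,4)
  | 7 => (2,3) | 8 => (2,4) | 9 => (3,4)

def rel5B (m : ℕ) (i j : Fin 5) : Bool :=
  if i.val < j.val then m.testBit (pidxNat i.val j.val)
  else if j.val < i.val then !(m.testBit (pidxNat j.val i.val))
  else false

def apexList : Fin 5 → List (Fin 5 × Fin 5 × Fin 5 × Fin 5)
  | 0 => [(1,2,3,4), (2,1,3,4), (3,1,2,4), (4,1,2,3)]
  | 1 => [(0,2,3,4), (2,0,3,4), (3,0,2,4), (4,0,2,3)]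
  | 2 => [(0,1,3,4), (1,0,3,4), (3,0,1,4), (4,0,1,3)]
  | 3 => [(0,1,2,4), (1,0,2,4), (2,0,1,4), (4,0,1,2)]
  | 4 => [(0,1,2,3), (1,0,2,3), (2,0,1,3), (3,0,1,2)]

def cyc2B (m : ℕ) (x y z : Fin 5) : Bool :=
  (rel5B m x y && rel5B m y z && rel5B m z x) || (rel5B m y x && rel5B m z y && rel5B m x z)

def domB (m : ℕ) (a b c d : Fin 5) : Bool :=
  (rel5B m a b && rel5B m a c && rel5B m a d) || (rel5B m b a && rel5B m c a && rel5B m d a)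

def diaVB (m : ℕ) (v : Fin 5) : Bool :=
  (apexList v).any (fun q => cyc2B m q.2.1 q.2.2.1 q.2.2.2 && domB m q.1 q.2.1 q.2.2.1 q.2.2.2)

def swB (m w : ℕ) (i j : Fin 5) : Bool :=
  if w.testBit i.val == w.testBit j.val then rel5B m i j else rel5B m j i

def tripleList : List (Fin 5 × Fin 5 × Fin 5) :=
  [(0,1,2),(0,1,3),(0,1,4),(0,2,1),(0,2,3),(0,2,4),(0,3,1),(0,3,2),(0,3,4),(0,4,1),(0,4,2),(0,4,3),
   (1,2,3),(1,2,4),(1,3,2),(1,3,4),(1,4,2),(1,4,3),(2,3,4),(2,4,3)]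

set_option maxRecDepth 100000 in
set_option maxHeartbeats 12000000 in
lemma keyA : ((List.range 1024).all fun m => (List.finRange 5).all fun v =>
    !(diaVB m v) || ((List.finRange 5).any fun u => (!(u == v)) && diaVB m u)) = true := by
  decide

set_option maxRecDepth 100000 in
set_option maxHeartbeats 12000000 in
lemma keyB : ((List.range 1024).all fun m =>
    ((List.finRange 5).any fun v => diaVB m v) ||
    ((List.range 32).any fun w => tripleList.all fun t =>
      !(swB m w t.1 t.2.1 && swB m w t.2.1 t.2.2 && swB m w t.2.2 t.1))) = true := by
  decide

/-! ### small decidable facts -/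

lemma upProps : ∀ k : Fin 10, (upPair k).1.val < (upPair k).2.val ∧
    pidxNat (upPair k).1.val (upPair k).2.val = k.val := by decide

lemma pidxSurj' : ∀ i j : Fin 5, i.val < j.val → ∃ k : Fin 10, (upPair k).1 = i ∧ (upPair k).2 = j := by decide

set_option maxRecDepth 4000 in
lemma apexProps : ∀ (v : Fin 5), ∀ q ∈ apexList v,
    q.1 ≠ v ∧ q.2.1 ≠ v ∧ q.2.2.1 ≠ v ∧ q.2.2.2 ≠ v ∧ q.1 ≠ q.2.1 ∧ q.1 ≠ q.2.2.1 ∧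
    q.1 ≠ q.2.2.2 ∧ q.2.1 ≠ q.2.2.1 ∧ q.2.1 ≠ q.2.2.2 ∧ q.2.2.1 ≠ q.2.2.2 := by decide

set_option maxHeartbeats 1000000 in
set_option maxRecDepth 4000 in
lemma apexMemB : ∀ (v a b c d : Fin 5), (a == v) = false → (b == v) = false →
    (c == v) = false → (d == v) = false → (a == b) = false → (a == c) = false →
    (a == d) = false → (b == c) = false → (b == d) = false → (c == d) = false →
    ((apexList v).any fun q => q.1 == a &&
      (q.2 == (b,c,d) || q.2 == (c,d,b) || q.2 == (d,b,c) ||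
       q.2 == (b,d,c) || q.2 == (d,c,b) || q.2 == (c,b,d))) = true := by decide

lemma tripleMem : ∀ i j k : Fin 5, i.val < j.val → i.val < k.val → j ≠ k →
    (i, j, k) ∈ tripleList := by decide

/-! ### encoding a tournament on 5 points -/

lemma foldr_lor_testBit (l : List ℕ) (n : ℕ) :
    (l.foldr (· ||| ·) 0).testBit n = l.any (fun x => x.testBit n) := by
  induction l with
  | nil => simp
  | cons a t ih => simp [Nat.testBit_lor, ih]

def mOf (p : Fin 10 → Bool) : ℕ :=
  ((List.finRange 10).map (fun k => if p k then 2^k.val else 0)).foldr (· ||| ·) 0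

lemma mOf_testBit (p : Fin 10 → Bool) (k : Fin 10) : (mOf p).testBit k.val = p k := by
  rw [mOf, foldr_lor_testBit]
  cases hp : p k with
  | false =>
    rw [List.any_eq_false]
    intro x hx
    rw [List.mem_map] at hx
    obtain ⟨k', -, rfl⟩ := hx
    cases hk' : p k' with
    | false => simp [hk']
    | true =>
      by_cases hkk : k'.val = k.val
      · have : k' = k := Fin.ext hkk
        rw [this] at hk'; rw [hk'] at hp; exact absurd hp (by simp)
      · simp [hk', Nat.testBit_two_pow_of_ne hkk]
  | true =>
    rw [List.any_eq_true]
    refine ⟨(if p k then 2^k.val else 0 : ℕ), List.mem_map.mpr ⟨k, List.mem_finRange k, rfl⟩, ?_⟩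
    simp [hp, Nat.testBit_two_pow_self]

lemma foldr_lor_lt {n : ℕ} (l : List ℕ) (h : ∀ x ∈ l, x < 2^n) :
    l.foldr (· ||| ·) 0 < 2^n := by
  induction l with
  | nil => simpa using Nat.pos_pow_of_pos n 2 (by norm_num)
  | cons a t ih =>
      simp only [List.foldr]
      exact Nat.bitwise_lt_two_pow (h a (by simp)) (ih (fun x hx => h x (by simp [hx])))

lemma mOf_lt (p : Fin 10 → Bool) : mOf p < 1024 := by
  have : (1024 : ℕ) = 2^10 := by norm_num
  rw [mOf, this]
  apply foldr_lor_lt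
  intro x hx
  simp only [List.mem_map] at hx
  obtain ⟨k, -, rfl⟩ := hx
  cases hk : p k with
  | false => simp [hk]
  | true =>
    simp only [hk, if_true]
    exact Nat.pow_lt_pow_right (by norm_num) k.isLt

/-! ### extraction from the boolean lemmas -/

lemma keyA' {m : ℕ} (hm : m < 1024) {v : Fin 5} (hv : diaVB m v = true) :
    ∃ u : Fin 5, u ≠ v ∧ diaVB m u = true := by
  have h1 := List.all_eq_true.mp keyA m (List.mem_range.mpr hm)
  have h2 := List.all_eq_true.mp h1 v (List.mem_finRange v)
  simp only [Bool.or_eq_true, Bool.not_eq_true'] at h2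
  rcases h2 with h2 | h2
  · rw [hv] at h2; exact absurd h2 (by simp)
  · obtain ⟨u, -, hu⟩ := List.any_eq_true.mp h2
    rw [Bool.and_eq_true, Bool.not_eq_true', beq_eq_false_iff_ne] at hu
    exact ⟨u, hu.1, hu.2⟩

lemma keyB' {m : ℕ} (hm : m < 1024) (hfree : ∀ v : Fin 5, diaVB m v = false) :
    ∃ w : ℕ, ∀ t ∈ tripleList, ¬(swB m w t.1 t.2.1 = true ∧ swB m w t.2.1 t.2.2 = true ∧
      swB m w t.2.2 t.1 = true) := by
  have h1 := List.all_eq_true.mp keyB m (List.mem_range.mpr hm)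
  rw [Bool.or_eq_true] at h1
  rcases h1 with h1 | h1
  · obtain ⟨u, -, hu⟩ := List.any_eq_true.mp h1
    rw [hfree u] at hu; exact absurd hu (by simp)
  · obtain ⟨w, -, hw⟩ := List.any_eq_true.mp h1
    refine ⟨w, fun t ht hcon => ?_⟩
    have h5 := List.all_eq_true.mp hw t ht
    rw [Bool.not_eq_true'] at h5
    rw [hcon.1, hcon.2.1, hcon.2.2] at h5
    simp at h5

lemma apexMem' {v a b c d : Fin 5} (hav : a ≠ v) (hbv : b ≠ v) (hcv : c ≠ v) (hdv : d ≠ v)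
    (hab : a ≠ b) (hac : a ≠ c) (had : a ≠ d) (hbc : b ≠ c) (hbd : b ≠ d) (hcd : c ≠ d) :
    ∃ x y z : Fin 5, (a,x,y,z) ∈ apexList v ∧
      ((x,y,z) = (b,c,d) ∨ (x,y,z) = (c,d,b) ∨ (x,y,z) = (d,b,c) ∨
       (x,y,z) = (b,d,c) ∨ (x,y,z) = (d,c,b) ∨ (x,y,z) = (c,b,d)) := by
  have h := apexMemB v a b c d (beq_eq_false_iff_ne.mpr hav) (beq_eq_false_iff_ne.mpr hbv)
    (beq_eq_false_iff_ne.mpr hcv) (beq_eq_false_iff_ne.mpr hdv) (beq_eq_false_iff_ne.mpr hab)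
    (beq_eq_false_iff_ne.mpr hac) (beq_eq_false_iff_ne.mpr had) (beq_eq_false_iff_ne.mpr hbc)
    (beq_eq_false_iff_ne.mpr hbd) (beq_eq_false_iff_ne.mpr hcd)
  obtain ⟨q, hqmem, hq⟩ := List.any_eq_true.mp h
  obtain ⟨qa, qx, qy, qz⟩ := q
  dsimp only at hq hqmem
  simp only [Bool.and_eq_true, Bool.or_eq_true, beq_iff_eq] at hq
  obtain ⟨rfl, hperm⟩ := hq
  exact ⟨qx, qy, qz, hqmem, by tauto⟩

/-! ### the abstract development -/

section Abstract
variable {V : Type*} [Fintype V] {r : V → V → Prop}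

omit [Fintype V] in
lemma diamond_card {X : Finset V} (h : IsDiamond r X) : X.card = 4 := by
  obtain ⟨a, b, c, d, hX, hab, hac, had, hbc, hbd, hcd, -⟩ := h
  subst hX
  rw [Finset.card_insert_of_notMem (by simp [hab, hac, had]),
    Finset.card_insert_of_notMem (by simp [hbc, hbd]),
    Finset.card_insert_of_notMem (by simp [hcd]), Finset.card_singleton]

omit [Fintype V] in
lemma exists_embed (hT : IsTournament r) {Y : Finset V} (hY : Y.card = 5) :
    ∃ (f : Fin 5 → V) (m : ℕ), Function.Injective f ∧ (∀ i, f i ∈ Y) ∧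
      (∀ y ∈ Y, ∃ i, f i = y) ∧ m < 1024 ∧ (∀ i j, rel5B m i j = true ↔ r (f i) (f j)) := by
  let e := Y.equivFin
  let f : Fin 5 → V := fun i => (e.symm ⟨i.val, by rw [hY]; exact i.isLt⟩ : {x // x ∈ Y}).val
  have hinj : Function.Injective f := by
    intro i j h
    have h2 := e.symm.injective (Subtype.coe_injective h)
    rw [Fin.mk.injEq] at h2
    exact Fin.ext h2
  have hmem : ∀ i, f i ∈ Y := fun i => (e.symm _).2
  have hsurj : ∀ y ∈ Y, ∃ i, f i = y := by
    intro y hy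
    refine ⟨⟨(e ⟨y, hy⟩).val, by rw [← hY]; exact (e ⟨y, hy⟩).isLt⟩, ?_⟩
    show (e.symm ⟨(e ⟨y, hy⟩).val, _⟩ : {x // x ∈ Y}).val = y
    have h0 : (⟨(e ⟨y, hy⟩).val, by exact (e ⟨y, hy⟩).isLt⟩ : Fin Y.card) = e ⟨y, hy⟩ := rfl
    rw [h0, Equiv.symm_apply_apply]
  set p : Fin 10 → Bool := fun k => decide (r (f (upPair k).1) (f (upPair k).2)) with hp
  have hpk : ∀ k : Fin 10, p k = true ↔ r (f (upPair k).1) (f (upPair k).2) := by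
    intro k; rw [hp]; exact decide_eq_true_iff
  refine ⟨f, mOf p, hinj, hmem, hsurj, mOf_lt p, ?_⟩
  have core : ∀ i j : Fin 5, i.val < j.val →
      ((mOf p).testBit (pidxNat i.val j.val) = true ↔ r (f i) (f j)) := by
    intro i j hij
    obtain ⟨k, hk1, hk2⟩ := pidxSurj' i j hij
    have h1 := (upProps k).2
    rw [hk1, hk2] at h1
    rw [h1, mOf_testBit]
    have h3 := hpk k
    rw [hk1, hk2] at h3
    exact h3
  intro i j
  rcases Nat.lt_trichotomy i.val j.val with hlt | heq | hgt
  · rw [show rel5B (mOf p) i j = (mOf p).testBit (pidxNat i.val j.val) from by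
      simp [rel5B, hlt]]
    exact core i j hlt
  · have h0 : i = j := Fin.ext heq
    subst h0
    simp only [rel5B, lt_irrefl, if_false, Bool.false_eq_true, false_iff]
    exact hT.1 (f i)
  · have hne : f i ≠ f j := hinj.ne (Fin.ne_of_val_ne (by omega))
    have hji := core j i hgt
    rw [show rel5B (mOf p) i j = !((mOf p).testBit (pidxNat j.val i.val)) from by
      simp [rel5B, hgt, Nat.lt_asymm hgt]]
    rw [Bool.not_eq_true']
    constructor
    · intro h
      refine (hT.2 (f i) (f j) hne).mpr (fun hr => ?_)
      rw [hji.mpr hr] at h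
      exact absurd h (by simp)
    · intro hr
      have h4 := (hT.2 (f i) (f j) hne).mp hr
      cases hb : (mOf p).testBit (pidxNat j.val i.val) with
      | false => rfl
      | true => exact absurd (hji.mp hb) h4

omit [Fintype V] in
lemma dia_corr (hT : IsTournament r) {Y : Finset V} {f : Fin 5 → V} {m : ℕ}
    (hY : Y.card = 5) (hinj : Function.Injective f) (hmem : ∀ i, f i ∈ Y)
    (hsurj : ∀ y ∈ Y, ∃ i, f i = y) (hbr : ∀ i j, rel5B m i j = true ↔ r (f i) (f j))
    (v : Fin 5) : diaVB m v = true ↔ IsDiamond r (Y.erase (f v)) := by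
  constructor
  · intro h
    obtain ⟨q, hqmem, hq⟩ := List.any_eq_true.mp h
    have hprops := apexProps v q hqmem
    obtain ⟨a, x, y, z⟩ := q
    dsimp only at hq hprops
    obtain ⟨hav, hxv, hyv, hzv, hax, hay, haz, hxy, hxz, hyz⟩ := hprops
    rw [Bool.and_eq_true] at hq
    obtain ⟨hcyc, hdom⟩ := hq
    simp only [cyc2B, domB, Bool.or_eq_true, Bool.and_eq_true] at hcyc hdom
    have hdom' : (r (f a) (f x) ∧ r (f a) (f y) ∧ r (f a) (f z)) ∨
        (r (f x) (f a) ∧ r (f y) (f a) ∧ r (f z) (f a)) := by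
      rcases hdom with ⟨⟨e1, e2⟩, e3⟩ | ⟨⟨e1, e2⟩, e3⟩
      · exact Or.inl ⟨(hbr _ _).mp e1, (hbr _ _).mp e2, (hbr _ _).mp e3⟩
      · exact Or.inr ⟨(hbr _ _).mp e1, (hbr _ _).mp e2, (hbr _ _).mp e3⟩
    have key : ∀ b c d : Fin 5, b ≠ v → c ≠ v → d ≠ v → a ≠ b → a ≠ c → a ≠ d →
        b ≠ c → b ≠ d → c ≠ d →
        r (f b) (f c) → r (f c) (f d) → r (f d) (f b) →
        ((r (f a) (f b) ∧ r (f a) (f c) ∧ r (f a) (f d)) ∨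
         (r (f b) (f a) ∧ r (f c) (f a) ∧ r (f d) (f a))) →
        IsDiamond r (Y.erase (f v)) := by
      intro b c d hbv hcv hdv hab hac had hbc hbd hcd h1 h2 h3 hdm
      have hsub : ({f a, f b, f c, f d} : Finset V) ⊆ Y.erase (f v) := by
        intro t ht
        simp only [Finset.mem_insert, Finset.mem_singleton] at ht
        rcases ht with rfl | rfl | rfl | rfl
        · exact Finset.mem_erase.mpr ⟨hinj.ne hav, hmem a⟩
        · exact Finset.mem_erase.mpr ⟨hinj.ne hbv, hmem b⟩
        · exact Finset.mem_erase.mpr ⟨hinj.ne hcv, hmem c⟩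
        · exact Finset.mem_erase.mpr ⟨hinj.ne hdv, hmem d⟩
      have hcard4 : ({f a, f b, f c, f d} : Finset V).card = 4 := by
        rw [Finset.card_insert_of_notMem (by simp [hinj.ne hab, hinj.ne hac, hinj.ne had]),
          Finset.card_insert_of_notMem (by simp [hinj.ne hbc, hinj.ne hbd]),
          Finset.card_insert_of_notMem (by simp [hinj.ne hcd]), Finset.card_singleton]
      have hce : (Y.erase (f v)).card = 4 := by
        rw [Finset.card_erase_of_mem (hmem v), hY]
      have heq := Finset.eq_of_subset_of_card_le hsub (by rw [hcard4, hce])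
      exact ⟨f a, f b, f c, f d, heq.symm, hinj.ne hab, hinj.ne hac, hinj.ne had,
        hinj.ne hbc, hinj.ne hbd, hinj.ne hcd, h1, h2, h3, hdm⟩
    rcases hcyc with ⟨⟨e1, e2⟩, e3⟩ | ⟨⟨e1, e2⟩, e3⟩
    · exact key x y z hxv hyv hzv hax hay haz hxy hxz hyz
        ((hbr _ _).mp e1) ((hbr _ _).mp e2) ((hbr _ _).mp e3) hdom'
    · refine key x z y hxv hzv hyv hax haz hay hxz hxy (fun hh => hyz hh.symm)
        ((hbr _ _).mp e3) ((hbr _ _).mp e2) ((hbr _ _).mp e1) ?_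
      rcases hdom' with ⟨d1, d2, d3⟩ | ⟨d1, d2, d3⟩
      · exact Or.inl ⟨d1, d3, d2⟩
      · exact Or.inr ⟨d1, d3, d2⟩
  · intro h
    obtain ⟨a', b', c', d', hXeq, hab, hac, had, hbc, hbd, hcd, h1, h2, h3, hdm⟩ := h
    have hmem4 : ∀ t, t ∈ ({a', b', c', d'} : Finset V) → t ∈ Y.erase (f v) := by
      intro t ht; rw [hXeq]; exact ht
    have haE := hmem4 a' (by simp)
    have hbE := hmem4 b' (by simp)
    have hcE := hmem4 c' (by simp)
    have hdE := hmem4 d' (by simp)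
    obtain ⟨ia, hia⟩ := hsurj a' (Finset.mem_of_mem_erase haE)
    obtain ⟨ib, hib⟩ := hsurj b' (Finset.mem_of_mem_erase hbE)
    obtain ⟨ic, hic⟩ := hsurj c' (Finset.mem_of_mem_erase hcE)
    obtain ⟨id, hid⟩ := hsurj d' (Finset.mem_of_mem_erase hdE)
    subst hia; subst hib; subst hic; subst hid
    have hiav : ia ≠ v := fun hh => (Finset.ne_of_mem_erase haE) (by rw [hh])
    have hibv : ib ≠ v := fun hh => (Finset.ne_of_mem_erase hbE) (by rw [hh])
    have hicv : ic ≠ v := fun hh => (Finset.ne_of_mem_erase hcE) (by rw [hh])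
    have hidv : id ≠ v := fun hh => (Finset.ne_of_mem_erase hdE) (by rw [hh])
    have nab : ia ≠ ib := fun hh => hab (by rw [hh])
    have nac : ia ≠ ic := fun hh => hac (by rw [hh])
    have nad : ia ≠ id := fun hh => had (by rw [hh])
    have nbc : ib ≠ ic := fun hh => hbc (by rw [hh])
    have nbd : ib ≠ id := fun hh => hbd (by rw [hh])
    have ncd : ic ≠ id := fun hh => hcd (by rw [hh])
    have eb1 : rel5B m ib ic = true := (hbr _ _).mpr h1
    have eb2 : rel5B m ic id = true := (hbr _ _).mpr h2
    have eb3 : rel5B m id ib = true := (hbr _ _).mpr h3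
    obtain ⟨x, y, z, hmemA, hperm⟩ := apexMem' hiav hibv hicv hidv nab nac nad nbc nbd ncd
    apply List.any_eq_true.mpr
    refine ⟨(ia, x, y, z), hmemA, ?_⟩
    dsimp only
    rcases hdm with ⟨q1, q2, q3⟩ | ⟨q1, q2, q3⟩
    · have db1 : rel5B m ia ib = true := (hbr _ _).mpr q1
      have db2 : rel5B m ia ic = true := (hbr _ _).mpr q2
      have db3 : rel5B m ia id = true := (hbr _ _).mpr q3
      rcases hperm with hp | hp | hp | hp | hp | hp <;>
        (simp only [Prod.mk.injEq] at hp; obtain ⟨rfl, rfl, rfl⟩ := hp) <;>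
        simp [cyc2B, domB, eb1, eb2, eb3, db1, db2, db3]
    · have db1 : rel5B m ib ia = true := (hbr _ _).mpr q1
      have db2 : rel5B m ic ia = true := (hbr _ _).mpr q2
      have db3 : rel5B m id ia = true := (hbr _ _).mpr q3
      rcases hperm with hp | hp | hp | hp | hp | hp <;>
        (simp only [Prod.mk.injEq] at hp; obtain ⟨rfl, rfl, rfl⟩ := hp) <;>
        simp [cyc2B, domB, eb1, eb2, eb3, db1, db2, db3]

omit [Fintype V] in
lemma switch_irrefl (hT : IsTournament r) (W : Set V) (x : V) : ¬ switchRel r W x x := by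
  intro h
  simp only [switchRel] at h
  rw [if_pos trivial] at h
  exact hT.1 x h

omit [Fintype V] in
lemma switch_asymm (hT : IsTournament r) (W : Set V) {x y : V}
    (h1 : switchRel r W x y) (h2 : switchRel r W y x) : False := by
  by_cases hxy : x = y
  · subst hxy; exact switch_irrefl hT W x h1
  simp only [switchRel] at h1 h2
  by_cases hc : (x ∈ W ↔ y ∈ W)
  · rw [if_pos hc] at h1; rw [if_pos hc.symm] at h2
    exact (hT.2 x y hxy).mp h1 h2
  · rw [if_neg hc] at h1; rw [if_neg (fun hh => hc hh.symm)] at h2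
    exact (hT.2 y x (Ne.symm hxy)).mp h1 h2

omit [Fintype V] in
lemma switch_total (hT : IsTournament r) (W : Set V) {x y : V} (hne : x ≠ y)
    (h : ¬ switchRel r W x y) : switchRel r W y x := by
  simp only [switchRel] at h ⊢
  by_cases hc : (x ∈ W ↔ y ∈ W)
  · rw [if_pos hc] at h; rw [if_pos hc.symm]
    exact (hT.2 y x hne.symm).mpr h
  · rw [if_neg hc] at h; rw [if_neg (fun hh => hc hh.symm)]
    by_contra hxy
    exact h ((hT.2 y x hne.symm).mpr hxy)

omit [Fintype V] in
lemma switch_free (hT : IsTournament r) {Y : Finset V} (hY : Y.card = 5)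
    (hfree : ∀ X, X ⊆ Y → ¬ IsDiamond r X) : ∃ W : Set V, IsTransitiveOn (switchRel r W) Y := by
  obtain ⟨f, m, hinj, hmem, hsurj, hm, hbr⟩ := exists_embed hT hY
  have hnone : ∀ v : Fin 5, diaVB m v = false := by
    intro v
    cases hd : diaVB m v with
    | false => rfl
    | true =>
      exact absurd ((dia_corr hT hY hinj hmem hsurj hbr v).mp hd)
        (hfree _ (Finset.erase_subset _ _))
  obtain ⟨w, hw⟩ := keyB' hm hnone
  refine ⟨f '' {i : Fin 5 | w.testBit i.val = true}, ?_⟩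
  set W : Set V := f '' {i : Fin 5 | w.testBit i.val = true} with hWdef
  have memW : ∀ i : Fin 5, (f i ∈ W) ↔ w.testBit i.val = true := by
    intro i
    constructor
    · rintro ⟨i', hi', he⟩; rwa [← hinj he]
    · intro hh; exact ⟨i, hh, rfl⟩
  have hsw : ∀ i j : Fin 5, switchRel r W (f i) (f j) ↔ swB m w i j = true := by
    intro i j
    simp only [switchRel, swB]
    by_cases hb : w.testBit i.val = w.testBit j.val
    · rw [if_pos (by rw [memW i, memW j, hb]), if_pos (beq_iff_eq.mpr hb)]
      exact (hbr i j).symm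
    · rw [if_neg (fun hiff => hb (Bool.coe_iff_coe.mp
        (((memW i).symm.trans hiff).trans (memW j)))),
        if_neg (by simp [hb])]
      exact (hbr j i).symm
  intro x hx y hy z hz hxy hyz
  obtain ⟨i, rfl⟩ := hsurj x hx
  obtain ⟨j, rfl⟩ := hsurj y hy
  obtain ⟨k, rfl⟩ := hsurj z hz
  have hij : i ≠ j := by
    intro hh; subst hh; exact switch_irrefl hT W (f i) hxy
  have hjk : j ≠ k := by
    intro hh; subst hh; exact switch_irrefl hT W (f j) hyz
  by_cases hik : i = k
  · subst hik; exact (switch_asymm hT W hxy hyz).elim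
  by_contra hxz
  have hzx := switch_total hT W (fun hh => hik (hinj hh)) hxz
  have b1 := (hsw i j).mp hxy
  have b2 := (hsw j k).mp hyz
  have b3 := (hsw k i).mp hzx
  have hvij : i.val ≠ j.val := fun hh => hij (Fin.ext hh)
  have hvjk : j.val ≠ k.val := fun hh => hjk (Fin.ext hh)
  have hvik : i.val ≠ k.val := fun hh => hik (Fin.ext hh)
  rcases (show (i.val < j.val ∧ i.val < k.val) ∨ (j.val < k.val ∧ j.val < i.val) ∨
      (k.val < i.val ∧ k.val < j.val) from by omega) with ⟨hl1, hl2⟩ | ⟨hl1, hl2⟩ | ⟨hl1, hl2⟩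
  · exact hw (i, j, k) (tripleMem i j k hl1 hl2 hjk) ⟨b1, b2, b3⟩
  · exact hw (j, k, i) (tripleMem j k i hl1 hl2 (fun hh => hik hh.symm)) ⟨b2, b3, b1⟩
  · exact hw (k, i, j) (tripleMem k i j hl1 hl2 hij) ⟨b3, b1, b2⟩

omit [Fintype V] in
lemma two_diamonds (hT : IsTournament r) {Y X₀ : Finset V} (hY : Y.card = 5)
    (hX₀Y : X₀ ⊆ Y) (hX₀ : IsDiamond r X₀) :
    ∃ X₁, X₁ ⊆ Y ∧ IsDiamond r X₁ ∧ X₁ ≠ X₀ := by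
  obtain ⟨f, m, hinj, hmem, hsurj, hm, hbr⟩ := exists_embed hT hY
  have hc4 := diamond_card hX₀
  have hsd : (Y \ X₀).card = 1 := by rw [Finset.card_sdiff_of_subset hX₀Y, hY, hc4]
  obtain ⟨y₀, hy₀⟩ := Finset.card_eq_one.mp hsd
  have hy₀mem : y₀ ∈ Y \ X₀ := hy₀ ▸ Finset.mem_singleton_self y₀
  have hy₀Y : y₀ ∈ Y := (Finset.mem_sdiff.mp hy₀mem).1
  have hy₀X : y₀ ∉ X₀ := (Finset.mem_sdiff.mp hy₀mem).2
  obtain ⟨v₀, hv₀⟩ := hsurj y₀ hy₀Y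
  have hX₀e : X₀ = Y.erase (f v₀) := by
    rw [hv₀]
    apply Finset.eq_of_subset_of_card_le
    · intro t ht
      exact Finset.mem_erase.mpr ⟨fun hh => hy₀X (hh ▸ ht), hX₀Y ht⟩
    · rw [Finset.card_erase_of_mem hy₀Y, hY, hc4]
  have hd₀ : diaVB m v₀ = true :=
    (dia_corr hT hY hinj hmem hsurj hbr v₀).mpr (hX₀e ▸ hX₀)
  obtain ⟨u, huv, hu⟩ := keyA' hm hd₀
  refine ⟨Y.erase (f u), Finset.erase_subset _ _,
    (dia_corr hT hY hinj hmem hsurj hbr u).mp hu, ?_⟩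
  intro hcon
  have h1 : f u ∈ X₀ := by
    rw [hX₀e]
    exact Finset.mem_erase.mpr ⟨hinj.ne huv, hmem u⟩
  rw [← hcon] at h1
  exact Finset.notMem_erase (f u) Y h1

lemma fiber_le_two (hcard : Fintype.card V = 6) {X : Finset V} (hX : X.card = 4) :
    ((Finset.powersetCard 5 (Finset.univ : Finset V)).filter (fun Y => X ⊆ Y)).card ≤ 2 := by
  classical
  have h2 : ((Finset.univ \ X).powersetCard 1).card = 2 := by
    rw [Finset.card_powersetCard, Finset.card_sdiff_of_subset (Finset.subset_univ X),
      Finset.card_univ, hcard, hX]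
    decide
  refine le_trans (Finset.card_le_card_of_injOn (fun Y => Y \ X) ?_ ?_) h2.le
  · intro Y hY
    rw [Finset.mem_coe, Finset.mem_filter, Finset.mem_powersetCard] at hY
    obtain ⟨⟨-, hY5⟩, hXY⟩ := hY
    rw [Finset.mem_coe, Finset.mem_powersetCard]
    refine ⟨Finset.sdiff_subset_sdiff (Finset.subset_univ Y) (Finset.Subset.refl X), ?_⟩
    rw [Finset.card_sdiff_of_subset hXY, hY5, hX]
  · intro Y1 h1 Y2 h2' he
    dsimp only at he
    have hxy1 : X ⊆ Y1 := (Finset.mem_filter.mp (Finset.mem_coe.mp h1)).2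
    have hxy2 : X ⊆ Y2 := (Finset.mem_filter.mp (Finset.mem_coe.mp h2')).2
    rw [← Finset.union_sdiff_of_subset hxy1, he, Finset.union_sdiff_of_subset hxy2]

lemma exists_free_five (hT : IsTournament r) (hcard : Fintype.card V = 6)
    (hδ : numDiamonds r < 6) :
    ∃ Y : Finset V, Y.card = 5 ∧ ∀ X, X ⊆ Y → ¬ IsDiamond r X := by
  classical
  set D := Finset.univ.filter (fun X : Finset V => IsDiamond r X) with hD
  have hnum : numDiamonds r = D.card := by
    rw [numDiamonds, show {X : Finset V | IsDiamond r X} = (↑D : Set (Finset V)) from by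
      ext X; simp [hD], Set.ncard_coe_finset]
  have hD5 : D.card ≤ 5 := by omega
  by_contra hcon
  push_neg at hcon
  set P5 := Finset.powersetCard 5 (Finset.univ : Finset V) with hP
  have hP5card : P5.card = 6 := by
    rw [hP, Finset.card_powersetCard, Finset.card_univ, hcard]
    decide
  have h2 : ∀ Y ∈ P5, 2 ≤ (D.filter (fun X => X ⊆ Y)).card := by
    intro Y hY
    have hY5 : Y.card = 5 := (Finset.mem_powersetCard.mp (hP ▸ hY)).2
    obtain ⟨X₀, hX₀Y, hX₀⟩ := hcon Y hY5
    obtain ⟨X₁, hX₁Y, hX₁, hne⟩ := two_diamonds hT hY5 hX₀Y hX₀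
    have m0 : X₀ ∈ D.filter (fun X => X ⊆ Y) :=
      Finset.mem_filter.mpr ⟨Finset.mem_filter.mpr ⟨Finset.mem_univ _, hX₀⟩, hX₀Y⟩
    have m1 : X₁ ∈ D.filter (fun X => X ⊆ Y) :=
      Finset.mem_filter.mpr ⟨Finset.mem_filter.mpr ⟨Finset.mem_univ _, hX₁⟩, hX₁Y⟩
    exact Finset.one_lt_card.mpr ⟨X₀, m0, X₁, m1, fun hh => hne hh.symm⟩
  have hsum1 : 12 ≤ ∑ Y ∈ P5, (D.filter (fun X => X ⊆ Y)).card := by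
    calc (12 : ℕ) = P5.card * 2 := by rw [hP5card]
    _ = ∑ _Y ∈ P5, 2 := by rw [Finset.sum_const, smul_eq_mul]
    _ ≤ _ := Finset.sum_le_sum h2
  have hswap : ∑ Y ∈ P5, (D.filter (fun X => X ⊆ Y)).card
      = ∑ X ∈ D, (P5.filter (fun Y => X ⊆ Y)).card := by
    simp_rw [Finset.card_filter]
    exact Finset.sum_comm
  have hsum2 : ∑ X ∈ D, (P5.filter (fun Y => X ⊆ Y)).card ≤ 10 := by
    calc ∑ X ∈ D, (P5.filter (fun Y => X ⊆ Y)).card ≤ ∑ _X ∈ D, 2 :=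
      Finset.sum_le_sum (fun X hX => by
        rw [hP]
        exact fiber_le_two hcard (diamond_card (Finset.mem_filter.mp hX).2))
    _ = D.card * 2 := by rw [Finset.sum_const, smul_eq_mul]
    _ ≤ 10 := by omega
  omega

end Abstract


theorem stmt10 {V : Type*} [Fintype V] [DecidableEq V] (r : V → V → Prop)
    (hT : IsTournament r) (hcard : Fintype.card V = 6) (hδ : numDiamonds r < 6) :
    ∃ (W : Set V) (X : Finset V), X.card = 5 ∧ IsTransitiveOn (switchRel r W) X := by
  obtain ⟨Y, hY5, hfree⟩ := exists_free_five hT hcard hδ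
  obtain ⟨W, htr⟩ := switch_free hT hY5 hfree
  exact ⟨W, Y, hY5, htr⟩
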